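/- In any null-faced 4-simplex, two hyperfaces are past-type and three are future-type, or vice versa: let ℓ₁, …, ℓ₅ ∈ ℝ⁴ be nonzero null vectors, pairwise linearly independent, with ℓ₁ + ℓ₂ + ℓ₃ + ℓ₄ + ℓ₅ = 0. Then the number of indices i with (ℓᵢ)₀ > 0 is exactly 2 or exactly 3. -/

import Mathlib

def eta (x y : Fin 4 → ℝ) : ℝ :=
  -(x 0 * y 0) + x 1 * y 1 + x 2 * y 2 + x 3 * y 3

set_option maxHeartbeats 1000000 in
lemma key (u v : Fin 4 → ℝ) (hu : eta u u = 0) (hv : eta v v = 0)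
    (h0 : 0 < u 0 * v 0) (hind : LinearIndependent ℝ ![u, v]) :
    eta u v < 0 := by
  by_contra hc
  push_neg at hc
  have hu' : u 1 * u 1 + u 2 * u 2 + u 3 * u 3 = u 0 * u 0 := by
    simp only [eta] at hu; linarith
  have hv' : v 1 * v 1 + v 2 * v 2 + v 3 * v 3 = v 0 * v 0 := by
    simp only [eta] at hv; linarith
  have hS : u 1 * v 1 + u 2 * v 2 + u 3 * v 3 ≥ u 0 * v 0 := by
    simp only [eta] at hc; linarith
  have lagrange : (u 1 * v 1 + u 2 * v 2 + u 3 * v 3) ^ 2 +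
      ((u 1 * v 2 - u 2 * v 1) ^ 2 + (u 1 * v 3 - u 3 * v 1) ^ 2 +
        (u 2 * v 3 - u 3 * v 2) ^ 2) = (u 0 * v 0) ^ 2 := by
    have h : (u 1 * v 1 + u 2 * v 2 + u 3 * v 3) ^ 2 +
        ((u 1 * v 2 - u 2 * v 1) ^ 2 + (u 1 * v 3 - u 3 * v 1) ^ 2 +
          (u 2 * v 3 - u 3 * v 2) ^ 2) =
        (u 1 * u 1 + u 2 * u 2 + u 3 * u 3) * (v 1 * v 1 + v 2 * v 2 + v 3 * v 3) := by
      ring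
    rw [h, hu', hv']; ring
  have h4 : (u 1 * v 1 + u 2 * v 2 + u 3 * v 3) ^ 2 ≤ (u 0 * v 0) ^ 2 := by
    nlinarith [sq_nonneg (u 1 * v 2 - u 2 * v 1), sq_nonneg (u 1 * v 3 - u 3 * v 1),
      sq_nonneg (u 2 * v 3 - u 3 * v 2)]
  have hSe : u 1 * v 1 + u 2 * v 2 + u 3 * v 3 = u 0 * v 0 := by
    nlinarith [h4, hS, h0]
  have hC : (u 1 * v 2 - u 2 * v 1) ^ 2 + (u 1 * v 3 - u 3 * v 1) ^ 2 +
      (u 2 * v 3 - u 3 * v 2) ^ 2 = 0 := by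
    rw [hSe] at lagrange; linarith
  have sq1 := sq_nonneg (u 1 * v 2 - u 2 * v 1)
  have sq2 := sq_nonneg (u 1 * v 3 - u 3 * v 1)
  have sq3 := sq_nonneg (u 2 * v 3 - u 3 * v 2)
  have h1 : u 1 * v 2 - u 2 * v 1 = 0 :=
    pow_eq_zero_iff (two_ne_zero) |>.mp (le_antisymm (by linarith) sq1)
  have h2 : u 1 * v 3 - u 3 * v 1 = 0 :=
    pow_eq_zero_iff (two_ne_zero) |>.mp (le_antisymm (by linarith) sq2)
  have h3 : u 2 * v 3 - u 3 * v 2 = 0 :=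
    pow_eq_zero_iff (two_ne_zero) |>.mp (le_antisymm (by linarith) sq3)
  have ha : u 0 ≠ 0 := by rintro h; rw [h] at h0; simp at h0
  have hq : v 1 * u 0 = u 1 * v 0 := by
    apply mul_right_cancel₀ ha
    linear_combination (-(v 1)) * hu' + u 1 * hSe + (-(u 2)) * h1 + (-(u 3)) * h2
  have hr : v 2 * u 0 = u 2 * v 0 := by
    apply mul_right_cancel₀ ha
    linear_combination (-(v 2)) * hu' + u 2 * hSe + u 1 * h1 + (-(u 3)) * h3
  have hs : v 3 * u 0 = u 3 * v 0 := by
    apply mul_right_cancel₀ ha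
    linear_combination (-(v 3)) * hu' + u 3 * hSe + u 1 * h2 + u 2 * h3
  have hdep : v 0 • u + (-(u 0)) • v = 0 := by
    funext k
    fin_cases k
    · show v 0 * u 0 + -(u 0) * v 0 = 0; ring
    · show v 0 * u 1 + -(u 0) * v 1 = 0; linarith
    · show v 0 * u 2 + -(u 0) * v 2 = 0; linarith
    · show v 0 * u 3 + -(u 0) * v 3 = 0; linarith
  obtain ⟨hp0, ha0⟩ := LinearIndependent.pair_iff.mp hind (v 0) (-(u 0)) hdep
  exact ha (by linarith [neg_eq_zero.mp ha0])

lemma eta_add_left (x y z : Fin 4 → ℝ) : eta (x + y) z = eta x z + eta y z := by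
  simp [eta]; ring

lemma eta_comm (x y : Fin 4 → ℝ) : eta x y = eta y x := by
  simp [eta]; ring

lemma eta_neg_neg (x : Fin 4 → ℝ) : eta (-x) (-x) = eta x x := by
  simp [eta]

lemma eta_sum_left {s : Finset (Fin 5)} (f : Fin 5 → Fin 4 → ℝ) (z : Fin 4 → ℝ) :
    eta (∑ i ∈ s, f i) z = ∑ i ∈ s, eta (f i) z := by
  induction s using Finset.induction_on with
  | empty => simp [eta]
  | insert _ _ h ih => rw [Finset.sum_insert h, Finset.sum_insert h, eta_add_left, ih]

lemma eta_sum_sum (s : Finset (Fin 5)) (f : Fin 5 → Fin 4 → ℝ) :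
    eta (∑ i ∈ s, f i) (∑ j ∈ s, f j) = ∑ i ∈ s, ∑ j ∈ s, eta (f i) (f j) := by
  rw [eta_sum_left]
  refine Finset.sum_congr rfl fun i _ => ?_
  rw [eta_comm, eta_sum_left]
  exact Finset.sum_congr rfl fun j _ => eta_comm _ _

lemma sum_eta_neg (ℓ : Fin 5 → Fin 4 → ℝ) (hnull : ∀ i, eta (ℓ i) (ℓ i) = 0)
    (hpair : ∀ i j, i ≠ j → LinearIndependent ℝ ![ℓ i, ℓ j])
    (s : Finset (Fin 5)) (hsign : ∀ i ∈ s, ∀ j ∈ s, i ≠ j → 0 < ℓ i 0 * ℓ j 0)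
    (h2 : 1 < s.card) :
    eta (∑ i ∈ s, ℓ i) (∑ i ∈ s, ℓ i) < 0 := by
  rw [eta_sum_sum]
  obtain ⟨i, hi, j, hj, hij⟩ := Finset.one_lt_card.mp h2
  have hterm : ∀ k ∈ s, ∀ m ∈ s, eta (ℓ k) (ℓ m) ≤ 0 := by
    intro k hk m hm
    rcases eq_or_ne k m with rfl | hkm
    · exact le_of_eq (hnull k)
    · exact (key _ _ (hnull k) (hnull m) (hsign k hk m hm hkm) (hpair k m hkm)).le
  have hinner : ∀ k ∈ s, ∑ m ∈ s, eta (ℓ k) (ℓ m) ≤ 0 := fun k hk =>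
    Finset.sum_nonpos (fun m hm => hterm k hk m hm)
  have hlt : ∑ m ∈ s, eta (ℓ i) (ℓ m) < 0 := by
    have h := Finset.sum_lt_sum (f := fun m => eta (ℓ i) (ℓ m)) (g := fun _ => (0 : ℝ))
      (fun m hm => hterm i hi m hm)
      ⟨j, hj, key _ _ (hnull i) (hnull j) (hsign i hi j hj hij) (hpair i j hij)⟩
    simpa using h
  have h := Finset.sum_lt_sum (f := fun k => ∑ m ∈ s, eta (ℓ k) (ℓ m))
    (g := fun _ => (0 : ℝ)) (fun k hk => hinner k hk) ⟨i, hi, hlt⟩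
  simpa using h

/-- In any null-faced 4-simplex, two hyperfaces are past-type and three are
future-type, or vice versa: if five nonzero, pairwise linearly independent null
vectors sum to zero, then exactly 2 or exactly 3 of them are future-pointing. -/
theorem nullFaced_simplex_causal_count (ℓ : Fin 5 → Fin 4 → ℝ)
    (hne : ∀ i, ℓ i ≠ 0) (hnull : ∀ i, eta (ℓ i) (ℓ i) = 0)
    (hpair : ∀ i j, i ≠ j → LinearIndependent ℝ ![ℓ i, ℓ j])
    (hsum : ∑ i, ℓ i = 0) :
    (Finset.univ.filter fun i => 0 < ℓ i 0).card = 2 ∨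
    (Finset.univ.filter fun i => 0 < ℓ i 0).card = 3 := by
  classical
  set P := Finset.univ.filter fun i => 0 < ℓ i 0 with hP
  have hne0 : ∀ i, ℓ i 0 ≠ 0 := by
    intro i h
    have h1 := hnull i
    simp only [eta, h] at h1
    apply hne i
    have e1 : ℓ i 1 = 0 := by nlinarith [sq_nonneg (ℓ i 2), sq_nonneg (ℓ i 3)]
    have e2 : ℓ i 2 = 0 := by nlinarith [sq_nonneg (ℓ i 1), sq_nonneg (ℓ i 3)]
    have e3 : ℓ i 3 = 0 := by nlinarith [sq_nonneg (ℓ i 1), sq_nonneg (ℓ i 2)]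
    funext k
    fin_cases k
    · exact h
    · exact e1
    · exact e2
    · exact e3
  have hneg : ∀ i ∉ P, ℓ i 0 < 0 := by
    intro i hi
    have h : ¬ 0 < ℓ i 0 := by
      intro h; exact hi (Finset.mem_filter.mpr ⟨Finset.mem_univ i, h⟩)
    exact lt_of_le_of_ne (not_lt.mp h) (hne0 i)
  have hpos : ∀ i ∈ P, 0 < ℓ i 0 := fun i hi => (Finset.mem_filter.mp hi).2
  have hsum0 : ∑ i, ℓ i 0 = 0 := by
    have h := congrFun hsum 0
    simpa using h
  have hcard5 : P.card ≤ 5 := le_trans (Finset.card_le_univ P) (by simp)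
  have hcne0 : P.card ≠ 0 := by
    intro h
    have hPempty : P = ∅ := Finset.card_eq_zero.mp h
    have hlt : ∑ i, ℓ i 0 < 0 := by
      apply Finset.sum_neg
      · intro i _
        exact hneg i (by simp [hPempty])
      · exact Finset.univ_nonempty
    linarith
  have hcne5 : P.card ≠ 5 := by
    intro h
    have hPuniv : P = Finset.univ := Finset.eq_univ_of_card P (by simp [h])
    have hlt : 0 < ∑ i, ℓ i 0 := by
      apply Finset.sum_pos
      · intro i _
        exact hpos i (by simp [hPuniv])
      · exact Finset.univ_nonempty
    linarith
  have hcne1 : P.card ≠ 1 := by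
    intro h
    obtain ⟨j, hj⟩ := Finset.card_eq_one.mp h
    have hsumP : ∑ i ∈ P, ℓ i = ℓ j := by rw [hj, Finset.sum_singleton]
    have h' := Finset.sum_add_sum_compl P ℓ
    rw [hsum, hsumP] at h'
    have hsC : ∑ i ∈ Pᶜ, ℓ i = -(ℓ j) := eq_neg_of_add_eq_zero_right h' 
    have hcard : 1 < Pᶜ.card := by
      rw [Finset.card_compl, h]; simp
    have hsign : ∀ i ∈ Pᶜ, ∀ k ∈ Pᶜ, i ≠ k → 0 < ℓ i 0 * ℓ k 0 := by
      intro i hi k hk _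
      exact mul_pos_of_neg_of_neg (hneg i (Finset.mem_compl.mp hi))
        (hneg k (Finset.mem_compl.mp hk))
    have hlt := sum_eta_neg ℓ hnull hpair Pᶜ hsign hcard
    rw [hsC, eta_neg_neg, hnull j] at hlt
    exact lt_irrefl 0 hlt
  have hcne4 : P.card ≠ 4 := by
    intro h
    have hcc : Pᶜ.card = 1 := by rw [Finset.card_compl, h]; simp
    obtain ⟨j, hj⟩ := Finset.card_eq_one.mp hcc
    have hsC : ∑ i ∈ Pᶜ, ℓ i = ℓ j := by rw [hj, Finset.sum_singleton]
    have h' := Finset.sum_add_sum_compl P ℓ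
    rw [hsum, hsC] at h'
    have hsumP : ∑ i ∈ P, ℓ i = -(ℓ j) := add_eq_zero_iff_eq_neg.mp h'
    have hcard : 1 < P.card := by rw [h]; norm_num
    have hsign : ∀ i ∈ P, ∀ k ∈ P, i ≠ k → 0 < ℓ i 0 * ℓ k 0 := by
      intro i hi k hk _
      exact mul_pos (hpos i hi) (hpos k hk)
    have hlt := sum_eta_neg ℓ hnull hpair P hsign hcard
    rw [hsumP, eta_neg_neg, hnull j] at hlt
    exact lt_irrefl 0 hlt
  omega
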